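/- arXiv:1508.07426 — 3 statements merged into one kernel-verified Lean document; each statement's English description precedes it below -/
import Mathlib

section
/- Let N ≥ 3 and 1 ≤ k ≤ N. Suppose p : [0,∞) → (0,∞) and h : [0,∞) → [0,∞) are continuous, h is nondecreasing with h(s) > 0 for s > 0, and p satisfies ∫_0^∞ ( (k/t^(N-k)) ∫_0^t (s^(N-1)/C(N-1,k-1)) p(s)^k ds )^(1/k) dt = ∞. If u : [0,∞) → [0,∞) is continuous, nondecreasing, not identically zero, and satisfies u(r) = u(0) + ∫_0^r ( (k/t^(N-k)) ∫_0^t (s^(N-1)/C(N-1,k-1)) p(s)^k h(u(s))^k ds )^(1/k) dt for all r ≥ 0, then u(r) → ∞ as r → ∞. -/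
open Real intervalIntegral Filter

open MeasureTheory in
lemma integ_aux (N k : ℕ) (hk1 : 1 ≤ k) (hkN : k ≤ N) (hN1 : 1 ≤ N) (w : ℝ → ℝ)
    (hw : ContinuousOn w (Set.Ici 0)) (hwnn : ∀ s, 0 ≤ s → 0 ≤ w s)
    (B : ℝ) (hB : 0 ≤ B) (x : ℝ) (hx : 0 ≤ x)
    (hwB : ∀ s ∈ Set.Icc (0:ℝ) x, w s ≤ B * s ^ (N-1)) :
    IntervalIntegrable (fun t => ((k / t ^ (N - k)) * ∫ s in (0:ℝ)..t, w s) ^ ((1:ℝ)/k))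
      MeasureTheory.volume 0 x := by
  have hk0 : (0:ℝ) < k := by exact_mod_cast hk1
  have hsub : N - 1 + 1 = N := Nat.succ_pred_eq_of_pos hN1
  have hcast : ((N-1:ℕ):ℝ) + 1 = (N:ℝ) := by exact_mod_cast congrArg (Nat.cast (R := ℝ)) hsub
  have hwint : ∀ t ∈ Set.Icc (0:ℝ) x, IntervalIntegrable w volume 0 t := by
    intro t ht
    apply ContinuousOn.intervalIntegrable
    apply hw.mono
    rw [Set.uIcc_of_le ht.1]
    exact fun s hs => hs.1
  have hWb : ∀ t ∈ Set.Icc (0:ℝ) x, (∫ s in (0:ℝ)..t, w s) ≤ B * (t ^ N / N) := by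
    intro t ht
    have h1 : (∫ s in (0:ℝ)..t, w s) ≤ ∫ s in (0:ℝ)..t, B * s ^ (N-1) := by
      apply integral_mono_on ht.1 (hwint t ht)
      · exact ((intervalIntegral.intervalIntegrable_pow (N-1)).const_mul B)
      · intro s hs
        exact hwB s ⟨hs.1, hs.2.trans ht.2⟩
    have h2 : (∫ s in (0:ℝ)..t, B * s ^ (N-1)) = B * (t ^ N / N) := by
      rw [intervalIntegral.integral_const_mul, integral_pow, hsub, hcast,
        zero_pow (by omega), sub_zero]
    linarith
  have hWnn : ∀ t ∈ Set.Icc (0:ℝ) x, 0 ≤ ∫ s in (0:ℝ)..t, w s := by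
    intro t ht
    apply intervalIntegral.integral_nonneg ht.1
    intro s hs; exact hwnn s hs.1
  set M : ℝ := k * B * x ^ k / N with hM
  have hbase : ∀ t ∈ Set.Ioc (0:ℝ) x, (k / t ^ (N - k)) * (∫ s in (0:ℝ)..t, w s) ≤ M := by
    intro t ht
    have ht0 : 0 < t := ht.1
    have htx : t ≤ x := ht.2
    have htmem : t ∈ Set.Icc (0:ℝ) x := ⟨le_of_lt ht0, htx⟩
    have hpow : (0:ℝ) < t ^ (N - k) := pow_pos ht0 _
    have h1 : (k / t ^ (N - k)) * (∫ s in (0:ℝ)..t, w s) ≤ (k / t ^ (N - k)) * (B * (t ^ N / N)) :=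
      mul_le_mul_of_nonneg_left (hWb t htmem) (div_nonneg hk0.le hpow.le)
    have h2 : (k / t ^ (N - k)) * (B * (t ^ N / N)) = k * B * t ^ k / N := by
      have htN : t ^ N = t ^ (N - k) * t ^ k := by
        rw [← pow_add, Nat.sub_add_cancel hkN]
      rw [htN]; field_simp
    have h3 : k * B * t ^ k / N ≤ M := by
      rw [hM]
      gcongr
    linarith
  have hbasenn : ∀ t ∈ Set.Ioc (0:ℝ) x, 0 ≤ (k / t ^ (N - k)) * (∫ s in (0:ℝ)..t, w s) := by
    intro t ht
    have ht0 : (0:ℝ) < t := ht.1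
    exact mul_nonneg (div_nonneg hk0.le (pow_nonneg ht0.le _)) (hWnn t ⟨ht0.le, ht.2⟩)
  have hWcont : ContinuousOn (fun t => ∫ s in (0:ℝ)..t, w s) (Set.Icc 0 x) := by
    have := intervalIntegral.continuousOn_primitive_interval (f := w) (a := (0:ℝ)) (b := x)
      (μ := volume) ?_
    · rwa [Set.uIcc_of_le hx] at this
    · rw [Set.uIcc_of_le hx]
      exact (hw.mono (fun s hs => hs.1)).integrableOn_compact isCompact_Icc
  have hcont : ContinuousOn (fun t => ((k / t ^ (N - k)) * ∫ s in (0:ℝ)..t, w s) ^ ((1:ℝ)/k))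
      (Set.Ioc 0 x) := by
    apply ContinuousOn.rpow_const
    · apply ContinuousOn.mul
      · apply ContinuousOn.div continuousOn_const (continuous_pow _).continuousOn
        intro t ht
        exact pow_ne_zero _ (ne_of_gt ht.1)
      · exact hWcont.mono (fun t ht => ⟨le_of_lt ht.1, ht.2⟩)
    · intro t _; right; positivity
  rw [intervalIntegrable_iff_integrableOn_Ioc_of_le hx]
  refine Integrable.mono' (g := fun _ => M ^ ((1:ℝ)/k))
    (integrableOn_const measure_Ioc_lt_top.ne)
    (hcont.aestronglyMeasurable measurableSet_Ioc) ?_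
  rw [ae_restrict_iff' measurableSet_Ioc]
  filter_upwards with t
  intro ht
  have h1 : 0 ≤ (k / t ^ (N - k)) * (∫ s in (0:ℝ)..t, w s) := hbasenn t ht
  rw [Real.norm_eq_abs, abs_of_nonneg (Real.rpow_nonneg h1 _)]
  exact Real.rpow_le_rpow h1 (hbase t ht) (by positivity)


open MeasureTheory in
set_option maxHeartbeats 1000000 in
/-- Largeness part of Theorem 2: under the divergence condition on `p`,
any nonnegative nontrivial nondecreasing solution of the integral equation is large. -/
theorem stmt5 (N k : ℕ) (hN : 3 ≤ N) (hk1 : 1 ≤ k) (hkN : k ≤ N)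
    (p h : ℝ → ℝ)
    (hp : ContinuousOn p (Set.Ici (0 : ℝ))) (hppos : ∀ r ∈ Set.Ici (0 : ℝ), 0 < p r)
    (hh : ContinuousOn h (Set.Ici (0 : ℝ))) (hhnn : ∀ s ∈ Set.Ici (0 : ℝ), 0 ≤ h s)
    (hhmono : MonotoneOn h (Set.Ici (0 : ℝ))) (hhpos : ∀ s : ℝ, 0 < s → 0 < h s)
    (hdiv : Tendsto (fun r : ℝ =>
        ∫ t in (0 : ℝ)..r,
          ((k / t ^ (N - k)) *
            ∫ s in (0 : ℝ)..t,
              s ^ (N - 1) / (Nat.choose (N - 1) (k - 1) : ℝ) * (p s) ^ k) ^ ((1 : ℝ) / k))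
      atTop atTop)
    (u : ℝ → ℝ) (hu : ContinuousOn u (Set.Ici (0 : ℝ)))
    (hunn : ∀ r ∈ Set.Ici (0 : ℝ), 0 ≤ u r)
    (humono : MonotoneOn u (Set.Ici (0 : ℝ)))
    (hunontriv : ∃ r ∈ Set.Ici (0 : ℝ), 0 < u r)
    (heq : ∀ r ∈ Set.Ici (0 : ℝ),
      u r = u 0 + ∫ t in (0 : ℝ)..r,
        ((k / t ^ (N - k)) *
          ∫ s in (0 : ℝ)..t,
            s ^ (N - 1) / (Nat.choose (N - 1) (k - 1) : ℝ) * (p s) ^ k * (h (u s)) ^ k)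
          ^ ((1 : ℝ) / k)) :
    Tendsto u atTop atTop := by
  have hN1 : 1 ≤ N := by omega
  have hk0 : (0:ℝ) < k := by exact_mod_cast hk1
  have hC : (0:ℝ) < (Nat.choose (N - 1) (k - 1) : ℝ) := by
    exact_mod_cast Nat.choose_pos (by omega)
  set g : ℝ → ℝ := fun s => s ^ (N - 1) / (Nat.choose (N - 1) (k - 1) : ℝ) * (p s) ^ k
    with hgdef
  set Φ : ℝ → ℝ := fun s =>
    s ^ (N - 1) / (Nat.choose (N - 1) (k - 1) : ℝ) * (p s) ^ k * (h (u s)) ^ k with hPhidef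
  set G : ℝ → ℝ := fun t => ((k / t ^ (N - k)) * ∫ s in (0:ℝ)..t, g s) ^ ((1:ℝ)/k) with hGdef
  set F : ℝ → ℝ := fun t => ((k / t ^ (N - k)) * ∫ s in (0:ℝ)..t, Φ s) ^ ((1:ℝ)/k) with hFdef
  have hPhig : ∀ s : ℝ, Φ s = g s * (h (u s)) ^ k := fun s => rfl
  -- continuity and nonnegativity
  have hhu : ContinuousOn (fun s => h (u s)) (Set.Ici (0:ℝ)) :=
    hh.comp hu (fun s hs => hunn s hs)
  have hgcont : ContinuousOn g (Set.Ici (0:ℝ)) := by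
    rw [hgdef]
    exact (((continuous_pow (N-1)).continuousOn).div_const _).mul (hp.pow k)
  have hPhicont : ContinuousOn Φ (Set.Ici (0:ℝ)) := by
    rw [hPhidef]
    exact (hgcont.mul (hhu.pow k)).congr (fun s _ => (hPhig s).symm) |>.mono (le_refl _)
  have hgnn : ∀ s, 0 ≤ s → 0 ≤ g s := by
    intro s hs
    have := (hppos s hs).le
    simp only [hgdef]
    positivity
  have hPhinn : ∀ s, 0 ≤ s → 0 ≤ Φ s := by
    intro s hs
    have h1 := hgnn s hs
    have h2 : 0 ≤ h (u s) := hhnn _ (hunn s hs)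
    rw [hPhig s]
    positivity
  -- interval integrability of g, Φ on subintervals of [0,∞)
  have hgII : ∀ a b : ℝ, 0 ≤ a → a ≤ b → IntervalIntegrable g MeasureTheory.volume a b := by
    intro a b ha hab
    apply ContinuousOn.intervalIntegrable
    apply hgcont.mono
    rw [Set.uIcc_of_le hab]
    exact fun s hs => ha.trans hs.1
  have hPhiII : ∀ a b : ℝ, 0 ≤ a → a ≤ b → IntervalIntegrable Φ MeasureTheory.volume a b := by
    intro a b ha hab
    apply ContinuousOn.intervalIntegrable
    apply hPhicont.mono
    rw [Set.uIcc_of_le hab]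
    exact fun s hs => ha.trans hs.1
  -- bounds of the form B * s^(N-1)
  have hbound : ∀ (q : ℝ → ℝ), ContinuousOn q (Set.Ici (0:ℝ)) → (∀ s, 0 ≤ s → 0 ≤ q s) →
      ∀ x : ℝ, 0 ≤ x → ∃ B : ℝ, 0 ≤ B ∧ ∀ s ∈ Set.Icc (0:ℝ) x,
        s ^ (N-1) * q s ≤ B * s ^ (N-1) := by
    intro q hq hqnn x hx
    obtain ⟨z, hz, hzmax⟩ := isCompact_Icc.exists_isMaxOn (Set.nonempty_Icc.2 hx)
      (hq.mono (fun s hs => hs.1))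
    refine ⟨q z, hqnn z hz.1, fun s hs => ?_⟩
    have h1 : q s ≤ q z := hzmax hs
    have h2 : (0:ℝ) ≤ s ^ (N-1) := pow_nonneg hs.1 _
    nlinarith
  have hGint : ∀ x : ℝ, 0 ≤ x → IntervalIntegrable G MeasureTheory.volume 0 x := by
    intro x hx
    obtain ⟨B, hB, hBb⟩ := hbound (fun s => (p s) ^ k / (Nat.choose (N - 1) (k - 1) : ℝ))
      ((hp.pow k).div_const _) (fun s hs => by have := (hppos s hs).le; positivity) x hx
    rw [hGdef]
    apply integ_aux N k hk1 hkN hN1 g hgcont hgnn B hB x hx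
    intro s hs
    calc g s = s ^ (N-1) * ((p s) ^ k / (Nat.choose (N - 1) (k - 1) : ℝ)) := by
              simp only [hgdef]; ring
      _ ≤ B * s ^ (N-1) := hBb s hs
  have hFint : ∀ x : ℝ, 0 ≤ x → IntervalIntegrable F MeasureTheory.volume 0 x := by
    intro x hx
    obtain ⟨B, hB, hBb⟩ := hbound
      (fun s => (p s) ^ k * (h (u s)) ^ k / (Nat.choose (N - 1) (k - 1) : ℝ))
      (((hp.pow k).mul (hhu.pow k)).div_const _)
      (fun s hs => by
        have h1 := (hppos s hs).le
        have h2 : 0 ≤ h (u s) := hhnn _ (hunn s hs)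
        positivity) x hx
    rw [hFdef]
    apply integ_aux N k hk1 hkN hN1 Φ hPhicont hPhinn B hB x hx
    intro s hs
    calc Φ s = s ^ (N-1) * ((p s) ^ k * (h (u s)) ^ k / (Nat.choose (N - 1) (k - 1) : ℝ)) := by
              simp only [hPhidef]; ring
      _ ≤ B * s ^ (N-1) := hBb s hs
  -- a point R ≥ 1 with u R > 0
  obtain ⟨R, hR1, huR⟩ : ∃ R : ℝ, 1 ≤ R ∧ 0 < u R := by
    obtain ⟨R0, hR0mem, hR0pos⟩ := hunontriv
    refine ⟨max R0 1, le_max_right _ _, ?_⟩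
    exact lt_of_lt_of_le hR0pos (humono hR0mem (Set.mem_Ici.2 (by
      have : (0:ℝ) ≤ 1 := zero_le_one
      exact this.trans (le_max_right _ _))) (le_max_left _ _))
  have hR0 : (0:ℝ) ≤ R := by linarith
  have hη : 0 < h (u R) := hhpos _ huR
  have hR2R : R ≤ 2 * R := by linarith
  have h2R0 : (0:ℝ) ≤ 2 * R := by linarith
  -- positivity of integrals of g
  have hgpos : ∀ a b : ℝ, 0 ≤ a → a < b → 0 < ∫ s in a..b, g s := by
    intro a b ha hab
    apply intervalIntegral_pos_of_pos_on (hgII a b ha hab.le) _ hab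
    intro s hs
    have hs0 : 0 < s := lt_of_le_of_lt ha hs.1
    simp only [hgdef]
    exact mul_pos (div_pos (pow_pos hs0 _) hC) (pow_pos (hppos s (Set.mem_Ici.2 hs0.le)) k)
  have hAR : 0 < ∫ s in (0:ℝ)..R, g s := hgpos 0 R le_rfl (by linarith)
  have hARsplit : (∫ s in (0:ℝ)..R, g s) + ∫ s in R..(2*R), g s = ∫ s in (0:ℝ)..(2*R), g s :=
    intervalIntegral.integral_add_adjacent_intervals (hgII 0 R le_rfl hR0) (hgII R (2*R) hR0 hR2R)
  have hARlt : (∫ s in (0:ℝ)..R, g s) < ∫ s in (0:ℝ)..(2*R), g s := by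
    have := hgpos R (2*R) hR0 (by linarith)
    linarith
  have hA2Rpos : 0 < ∫ s in (0:ℝ)..(2*R), g s := lt_trans hAR hARlt
  set c : ℝ := 1 - (∫ s in (0:ℝ)..R, g s) / (∫ s in (0:ℝ)..(2*R), g s) with hcdef
  have hc : 0 < c := by
    rw [hcdef]
    have : (∫ s in (0:ℝ)..R, g s) / (∫ s in (0:ℝ)..(2*R), g s) < 1 :=
      (div_lt_one hA2Rpos).2 hARlt
    linarith
  -- monotonicity of A
  have hAt : ∀ t : ℝ, 2*R ≤ t → (∫ s in (0:ℝ)..(2*R), g s) ≤ ∫ s in (0:ℝ)..t, g s := by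
    intro t ht
    have hsplit := intervalIntegral.integral_add_adjacent_intervals
      (hgII 0 (2*R) le_rfl h2R0) (hgII (2*R) t h2R0 ht)
    have hnn : 0 ≤ ∫ s in (2*R)..t, g s :=
      intervalIntegral.integral_nonneg ht (fun s hs => hgnn s (h2R0.trans hs.1))
    linarith
  -- key lower bound on the inner integral of Φ
  have hIA : ∀ t : ℝ, 2*R ≤ t →
      (h (u R))^k * c * (∫ s in (0:ℝ)..t, g s) ≤ ∫ s in (0:ℝ)..t, Φ s := by
    intro t ht
    have hRt : R ≤ t := hR2R.trans ht
    have hsplitPhi := intervalIntegral.integral_add_adjacent_intervals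
      (hPhiII 0 R le_rfl hR0) (hPhiII R t hR0 hRt)
    have hsplitg := intervalIntegral.integral_add_adjacent_intervals
      (hgII 0 R le_rfl hR0) (hgII R t hR0 hRt)
    have h0R : 0 ≤ ∫ s in (0:ℝ)..R, Φ s :=
      intervalIntegral.integral_nonneg hR0 (fun s hs => hPhinn s hs.1)
    have hmono1 : (∫ s in R..t, (h (u R))^k * g s) ≤ ∫ s in R..t, Φ s := by
      apply integral_mono_on hRt ((hgII R t hR0 hRt).const_mul _) (hPhiII R t hR0 hRt)
      intro s hs
      have hs0 : (0:ℝ) ≤ s := hR0.trans hs.1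
      have hus : u R ≤ u s := humono (Set.mem_Ici.2 hR0) (Set.mem_Ici.2 hs0) hs.1
      have hhus : h (u R) ≤ h (u s) :=
        hhmono (Set.mem_Ici.2 (hunn R (Set.mem_Ici.2 hR0)))
          (Set.mem_Ici.2 (hunn s (Set.mem_Ici.2 hs0))) hus
      have hpk : (h (u R))^k ≤ (h (u s))^k := pow_le_pow_left₀ hη.le hhus k
      rw [hPhig s]
      have := mul_le_mul_of_nonneg_left hpk (hgnn s hs0)
      linarith [this]
    have hconst : (∫ s in R..t, (h (u R))^k * g s) = (h (u R))^k * ∫ s in R..t, g s :=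
      intervalIntegral.integral_const_mul _ _
    -- c * A t ≤ A t - A R
    have hcA : c * (∫ s in (0:ℝ)..t, g s) ≤
        (∫ s in (0:ℝ)..t, g s) - ∫ s in (0:ℝ)..R, g s := by
      have hq : (0:ℝ) ≤ (∫ s in (0:ℝ)..R, g s) / (∫ s in (0:ℝ)..(2*R), g s) :=
        div_nonneg hAR.le hA2Rpos.le
      have h1 : ((∫ s in (0:ℝ)..R, g s) / (∫ s in (0:ℝ)..(2*R), g s)) *
          (∫ s in (0:ℝ)..(2*R), g s) = ∫ s in (0:ℝ)..R, g s :=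
        div_mul_cancel₀ _ hA2Rpos.ne'
      have h2 := mul_le_mul_of_nonneg_left (hAt t ht) hq
      rw [hcdef]
      nlinarith [h1, h2]
    have hfinal := mul_le_mul_of_nonneg_left hcA (pow_nonneg hη.le k)
    have hRtg : (∫ s in R..t, g s) = (∫ s in (0:ℝ)..t, g s) - ∫ s in (0:ℝ)..R, g s := by
      linarith
    rw [hRtg] at hconst
    linarith [hmono1, hconst, h0R, hsplitPhi, hfinal]
  -- pointwise comparison F ≥ β G for t ≥ 2R
  have hec : (0:ℝ) < (h (u R))^k * c := mul_pos (pow_pos hη k) hc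
  set β : ℝ := ((h (u R))^k * c) ^ ((1:ℝ)/k) with hβdef
  have hβ : 0 < β := Real.rpow_pos_of_pos hec _
  have hFG : ∀ t : ℝ, 2*R ≤ t → β * G t ≤ F t := by
    intro t ht
    have ht0 : (0:ℝ) < t := lt_of_lt_of_le (by linarith) ht
    have hb2 : 0 ≤ (k / t ^ (N - k)) * ∫ s in (0:ℝ)..t, g s := by
      apply mul_nonneg (div_nonneg hk0.le (pow_nonneg ht0.le _))
      exact intervalIntegral.integral_nonneg (by linarith) (fun s hs => hgnn s hs.1)
    have hkey : ((h (u R))^k * c) * ((k / t ^ (N - k)) * ∫ s in (0:ℝ)..t, g s) ≤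
        (k / t ^ (N - k)) * ∫ s in (0:ℝ)..t, Φ s := by
      have := mul_le_mul_of_nonneg_left (hIA t ht)
        (div_nonneg hk0.le (pow_nonneg ht0.le (N-k)))
      calc ((h (u R))^k * c) * ((k / t ^ (N - k)) * ∫ s in (0:ℝ)..t, g s)
          = (k / t ^ (N - k)) * ((h (u R))^k * c * ∫ s in (0:ℝ)..t, g s) := by ring
        _ ≤ (k / t ^ (N - k)) * ∫ s in (0:ℝ)..t, Φ s := this
    have h2 : (((h (u R))^k * c) * ((k / t ^ (N - k)) * ∫ s in (0:ℝ)..t, g s)) ^ ((1:ℝ)/k)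
        ≤ F t := by
      rw [hFdef]
      exact Real.rpow_le_rpow (mul_nonneg hec.le hb2) hkey (by positivity)
    rw [Real.mul_rpow hec.le hb2] at h2
    rw [hβdef, hGdef]
    exact h2
  -- main inequality for r ≥ 2R
  have key : ∀ r : ℝ, 2*R ≤ r →
      u (2*R) - β * (∫ t in (0:ℝ)..(2*R), G t) + β * (∫ t in (0:ℝ)..r, G t) ≤ u r := by
    intro r hr
    have hr0 : (0:ℝ) ≤ r := h2R0.trans hr
    have e1 := heq r (Set.mem_Ici.2 hr0)
    have e2 := heq (2*R) (Set.mem_Ici.2 h2R0)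
    have hF2Rr : IntervalIntegrable F MeasureTheory.volume (2*R) r :=
      (hFint (2*R) h2R0).symm.trans (hFint r hr0)
    have hG2Rr : IntervalIntegrable G MeasureTheory.volume (2*R) r :=
      (hGint (2*R) h2R0).symm.trans (hGint r hr0)
    have hFsplit := intervalIntegral.integral_add_adjacent_intervals
      (hFint (2*R) h2R0) hF2Rr
    have hGsplit := intervalIntegral.integral_add_adjacent_intervals
      (hGint (2*R) h2R0) hG2Rr
    have hmono : (∫ t in (2*R)..r, β * G t) ≤ ∫ t in (2*R)..r, F t := by
      apply integral_mono_on hr (hG2Rr.const_mul β) hF2Rr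
      intro t htt
      exact hFG t htt.1
    rw [intervalIntegral.integral_const_mul] at hmono
    have hX : (∫ t in (2*R)..r, G t) =
        (∫ t in (0:ℝ)..r, G t) - ∫ t in (0:ℝ)..(2*R), G t := by linarith
    rw [hX] at hmono
    linarith [hmono, e1, e2, hFsplit]
  -- conclude
  have htend : Tendsto (fun r : ℝ =>
      u (2*R) - β * (∫ t in (0:ℝ)..(2*R), G t) + β * (∫ t in (0:ℝ)..r, G t)) atTop atTop :=
    tendsto_atTop_add_const_left _ _ (hdiv.const_mul_atTop hβ)
  apply tendsto_atTop_mono' atTop _ htend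
  filter_upwards [eventually_ge_atTop (2*R)] with r hr
  exact key r hr
end

section
/- Let k ≥ 1 be a natural number and N ≥ 3, and let w : (0,∞) → ℝ be C² with w' ≥ 0. Suppose [ (r^(N-k)/k) (w'(r))^k ]' = (r^(N-1)/C(N-1,k-1)) P(r) for all r > 0, where P ≥ 0 is continuous. Then for all r > 0, { [ r^(N/k - 1) w'(r) ]^(k+1) }' = ((k+1)/C(N-1,k-1)) · P(r) · r^(N + N/k - 2) · w'(r). -/
open Real

/-- Identity (14) of the paper: multiplying the radial k-Hessian equation by
`r^(N+N/k-2) w'(r)` produces an exact derivative. -/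
theorem stmt7 (k N : ℕ) (hk : 1 ≤ k) (hN : 3 ≤ N) (hkN : k ≤ N)
    (w : ℝ → ℝ) (hw : ContDiffOn ℝ 2 w (Set.Ioi (0 : ℝ)))
    (hw' : ∀ r ∈ Set.Ioi (0 : ℝ), 0 ≤ deriv w r)
    (P : ℝ → ℝ) (hP : ContinuousOn P (Set.Ioi (0 : ℝ)))
    (hPnn : ∀ r ∈ Set.Ioi (0 : ℝ), 0 ≤ P r)
    (heq : ∀ r ∈ Set.Ioi (0 : ℝ),
      deriv (fun t => t ^ (N - k) / k * (deriv w t) ^ k) r =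
        r ^ (N - 1) / (Nat.choose (N - 1) (k - 1) : ℝ) * P r) :
    ∀ r ∈ Set.Ioi (0 : ℝ),
      deriv (fun t => (t ^ ((N : ℝ) / k - 1) * deriv w t) ^ (k + 1)) r =
        ((k : ℝ) + 1) / (Nat.choose (N - 1) (k - 1) : ℝ) * P r *
          r ^ ((N : ℝ) + (N : ℝ) / k - 2) * deriv w r := by
  intro r hr
  have hr0 : (0:ℝ) < r := hr
  have hk0 : (k:ℝ) ≠ 0 := Nat.cast_ne_zero.mpr (by omega)
  set a : ℝ := (N:ℝ)/k - 1 with ha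
  set g : ℝ → ℝ := fun t => t ^ a * deriv w t with hgdef
  have hopen : IsOpen (Set.Ioi (0:ℝ)) := isOpen_Ioi
  have hdw : ContDiffOn ℝ 1 (deriv w) (Set.Ioi 0) :=
    hw.deriv_of_isOpen hopen (by norm_num)
  have hdwd : DifferentiableAt ℝ (deriv w) r :=
    (hdw.differentiableOn one_ne_zero).differentiableAt (hopen.mem_nhds hr)
  have hpw : DifferentiableAt ℝ (fun t : ℝ => t ^ a) r :=
    (Real.hasDerivAt_rpow_const (p := a) (Or.inl hr0.ne')).differentiableAt
  have hg : DifferentiableAt ℝ g r := hpw.mul hdwd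
  set c : ℝ := deriv g r with hc
  have hgg : HasDerivAt g c r := hg.hasDerivAt
  have hF : HasDerivAt (fun t => g t ^ k / (k:ℝ)) (g r ^ (k-1) * c) r := by
    have h := (hgg.pow k).div_const (k:ℝ)
    refine h.congr_deriv ?_
    rw [mul_assoc, mul_div_cancel_left₀ _ hk0]
  have heqev : (fun t : ℝ => t ^ (N - k) / (k:ℝ) * (deriv w t) ^ k)
      =ᶠ[nhds r] (fun t => g t ^ k / (k:ℝ)) := by
    filter_upwards [hopen.mem_nhds hr] with t ht
    have ht0 : (0:ℝ) < t := ht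
    have h1 : (t ^ a) ^ k = t ^ (N - k) := by
      rw [← Real.rpow_natCast (t ^ a) k, ← Real.rpow_natCast t (N - k),
        ← Real.rpow_mul ht0.le]
      congr 1
      rw [Nat.cast_sub hkN]
      rw [ha, sub_mul, div_mul_cancel₀ _ hk0, one_mul]
    simp only [hgdef, mul_pow, h1]
    ring
  have key : g r ^ (k-1) * c =
      r ^ (N-1) / (Nat.choose (N - 1) (k - 1) : ℝ) * P r := by
    rw [← hF.deriv, ← heqev.deriv_eq]
    exact heq r hr
  have hgk : g r ^ k = g r * g r ^ (k-1) := by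
    conv_lhs => rw [← Nat.succ_pred_eq_of_pos (by omega : 0 < k)]
    rw [pow_succ', Nat.pred_eq_sub_one]
  have hmain := hgg.pow (k+1)
  simp only [Nat.add_sub_cancel, Nat.cast_add, Nat.cast_one] at hmain
  rw [show (fun t => (t ^ a * deriv w t) ^ (k + 1)) = g ^ (k+1) from rfl, hmain.deriv]
  have h2 : g r ^ k * c = g r * (r ^ (N-1) / (Nat.choose (N - 1) (k - 1) : ℝ) * P r) := by
    rw [← key, hgk]; ring
  rw [mul_assoc, h2]
  have hrpow : r ^ ((N:ℝ) + (N:ℝ)/k - 2) = r ^ a * r ^ (N-1 : ℕ) := by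
    rw [← Real.rpow_natCast r (N-1), ← Real.rpow_add hr0]
    congr 1
    rw [Nat.cast_sub (by omega : 1 ≤ N)]
    push_cast [ha]; ring
  simp only [hgdef]
  rw [hrpow]
  ring
end

section
/- Let k ≥ 1, N ≥ 3, R > 0 and let w : [0,R] → [1,∞) be C², nondecreasing, with w(0) = 1, w'(0) = 0, satisfying the differential inequality [ (r^(N-k)/k)(w'(r))^k ]' ≤ (r^(N-1)/C(N-1,k-1)) φ · h(w(r))^k on (0,R], where φ > 0 is a constant and h : [1,∞) → (0,∞) is continuous nondecreasing. Then ∫_1^{w(R)} ( ∫_1^t h(s)^k ds )^(-1/(k+1)) dt ≤ ( (k+1) φ / C(N-1,k-1) )^(1/(k+1)) · R^(2k/(k+1)). -/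
open Real intervalIntegral

set_option maxHeartbeats 1000000 in
/-- Full a priori estimate on `[0,R]` from the proof of Theorem 1. -/
theorem stmt17 (k N : ℕ) (hk : 1 ≤ k) (hN : 3 ≤ N) (hkN : k ≤ N)
    (R φ : ℝ) (hR : 0 < R) (hφ : 0 < φ)
    (h : ℝ → ℝ) (hh : ContinuousOn h (Set.Ici (1 : ℝ)))
    (hhpos : ∀ s ∈ Set.Ici (1 : ℝ), 0 < h s) (hhmono : MonotoneOn h (Set.Ici (1 : ℝ)))
    (w : ℝ → ℝ) (hw : ContDiff ℝ 2 w)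
    (hwmap : ∀ r ∈ Set.Icc (0 : ℝ) R, 1 ≤ w r)
    (hwmono : MonotoneOn w (Set.Icc (0 : ℝ) R))
    (hw0 : w 0 = 1) (hw'0 : deriv w 0 = 0)
    (hineq : ∀ r ∈ Set.Ioc (0 : ℝ) R,
      deriv (fun t => t ^ (N - k) / k * (deriv w t) ^ k) r ≤
        r ^ (N - 1) / (Nat.choose (N - 1) (k - 1) : ℝ) * φ * (h (w r)) ^ k) :
    (∫ t in (1 : ℝ)..(w R),
        (∫ s in (1 : ℝ)..t, (h s) ^ k) ^ (-(1 : ℝ) / (k + 1))) ≤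
      (((k : ℝ) + 1) * φ / (Nat.choose (N - 1) (k - 1) : ℝ)) ^ ((1 : ℝ) / (k + 1))
        * R ^ (2 * (k : ℝ) / (k + 1)) := by
  have hk1 : (1:ℝ) ≤ (k:ℝ) := by exact_mod_cast hk
  have hkpos : (0:ℝ) < (k:ℝ) := by linarith
  set C : ℝ := (Nat.choose (N - 1) (k - 1) : ℝ) with hCdef
  have hC : 0 < C := by
    have : 0 < Nat.choose (N - 1) (k - 1) := Nat.choose_pos (by omega)
    rw [hCdef]
    exact_mod_cast this
  set c : ℝ := φ / C with hcdef
  have hc : 0 < c := div_pos hφ hC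
  -- regularity
  have hwd : Differentiable ℝ w := hw.differentiable (by norm_num)
  have h2 : (2 : WithTop ℕ∞) = 1 + 1 := by norm_num
  have hw1 : ContDiff ℝ 1 (deriv w) := (contDiff_succ_iff_deriv.mp (h2 ▸ hw)).2.2
  have hw'c : Continuous (deriv w) := hw1.continuous
  have hw'd : Differentiable ℝ (deriv w) := hw1.differentiable one_ne_zero
  -- nonnegativity of the derivative
  have hw'nonneg : ∀ r ∈ Set.Icc (0:ℝ) R, 0 ≤ deriv w r := by
    intro r hr
    rcases lt_or_eq_of_le hr.2 with hrR | hrR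
    · have hd : HasDerivWithinAt w (deriv w r) (Set.Ioi r) r :=
        (hwd r).hasDerivAt.hasDerivWithinAt
      rw [hasDerivWithinAt_iff_tendsto_slope' (Set.notMem_Ioi.2 le_rfl)] at hd
      refine ge_of_tendsto hd ?_
      have hmem : Set.Ioo r R ∈ nhdsWithin r (Set.Ioi r) :=
        Ioo_mem_nhdsGT_of_mem ⟨le_refl r, hrR⟩
      filter_upwards [hmem] with x hx
      have h1 : 0 ≤ w x - w r :=
        sub_nonneg.2 (hwmono hr ⟨hr.1.trans hx.1.le, hx.2.le⟩ hx.1.le)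
      have h2' : 0 < x - r := sub_pos.2 hx.1
      rw [slope_def_field]
      exact div_nonneg h1 h2'.le
    · subst hrR
      have hd : HasDerivWithinAt w (deriv w r) (Set.Iio r) r :=
        (hwd r).hasDerivAt.hasDerivWithinAt
      rw [hasDerivWithinAt_iff_tendsto_slope' (Set.notMem_Iio.2 le_rfl)] at hd
      refine ge_of_tendsto hd ?_
      have hmem : Set.Ioo (0:ℝ) r ∈ nhdsWithin r (Set.Iio r) :=
        Ioo_mem_nhdsLT_of_mem ⟨hR, le_refl r⟩
      filter_upwards [hmem] with x hx
      have h1 : w x - w r ≤ 0 :=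
        sub_nonpos.2 (hwmono ⟨hx.1.le, hx.2.le⟩ ⟨hR.le, le_refl r⟩ hx.2.le)
      have h2' : x - r < 0 := sub_neg.2 hx.2
      rw [slope_def_field]
      exact div_nonneg_of_nonpos h1 h2'.le
  -- pointwise differential inequality after dropping the nonnegative term
  have key : ∀ r ∈ Set.Icc (0:ℝ) R,
      (deriv w r)^k * deriv (deriv w) r ≤ R^(k-1) * c * (h (w r))^k * deriv w r := by
    intro r hr
    rcases eq_or_lt_of_le hr.1 with h0 | h0
    · rw [← h0]
      simp [hw'0, zero_pow (by omega : k ≠ 0)]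
    · have hin := hineq r ⟨h0, hr.2⟩
      have A1 : HasDerivAt (fun t:ℝ => t ^ (N-k) / (k:ℝ)) (((N-k:ℕ):ℝ) * r^(N-k-1) / k) r :=
        (hasDerivAt_pow (N-k) r).div_const k
      have A2 : HasDerivAt (fun t => (deriv w t)^k)
          ((k:ℝ) * (deriv w r)^(k-1) * deriv (deriv w) r) r :=
        ((hw'd r).hasDerivAt).pow k
      have A3 : deriv (fun t => t ^ (N - k) / (k:ℝ) * deriv w t ^ k) r = _ := (A1.mul A2).deriv
      rw [A3] at hin
      have hterm1 : 0 ≤ ((N-k:ℕ):ℝ) * r^(N-k-1) / k * (deriv w r)^k := by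
        have := pow_nonneg (hw'nonneg r hr) k
        positivity
      have hin2 : r ^ (N-k) / k * ((k:ℝ) * (deriv w r)^(k-1) * deriv (deriv w) r) ≤
          r ^ (N - 1) / C * φ * (h (w r)) ^ k := by linarith
      have hrw : r ^ (N-k) / (k:ℝ) * ((k:ℝ) * (deriv w r)^(k-1) * deriv (deriv w) r)
          = r ^ (N-k) * ((deriv w r)^(k-1) * deriv (deriv w) r) := by
        field_simp
      have hrw2 : r ^ (N - 1) / C * φ * (h (w r)) ^ k
          = r ^ (N-k) * (r ^ (k-1) * c * (h (w r))^k) := by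
        rw [hcdef, show N - 1 = (N-k) + (k-1) by omega, pow_add]
        field_simp
      rw [hrw, hrw2] at hin2
      have h5 : (deriv w r)^(k-1) * deriv (deriv w) r ≤ r ^ (k-1) * c * (h (w r))^k :=
        le_of_mul_le_mul_left (by linarith) (pow_pos h0 (N-k))
      have h6 : r ^ (k-1) ≤ R ^ (k-1) := pow_le_pow_left₀ h0.le hr.2 (k-1)
      have hwr1 : 1 ≤ w r := hwmap r hr
    
      have hhwr : 0 < h (w r) := hhpos _ hwr1
      have h7 : (deriv w r)^(k-1) * deriv (deriv w) r ≤ R ^ (k-1) * c * (h (w r))^k := by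
        refine h5.trans ?_
        have : 0 < c * (h (w r))^k := by positivity
        nlinarith
      have h8 := mul_le_mul_of_nonneg_left h7 (hw'nonneg r hr)
      have h9 : deriv w r * ((deriv w r)^(k-1) * deriv (deriv w) r)
          = (deriv w r)^k * deriv (deriv w) r := by
        rw [← mul_assoc, ← pow_succ']
        congr 2
        omega
      rw [h9] at h8
      refine h8.trans (le_of_eq ?_)
      ring
  -- the auxiliary continuous extension of h and the primitive H
  set g0 : ℝ → ℝ := fun s => h (max 1 s) with hg0def
  have hg0c : Continuous g0 :=
    hh.comp_continuous (continuous_const.max continuous_id) (fun x => le_max_left 1 x)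
  have hg0eq : ∀ s, 1 ≤ s → g0 s = h s := by
    intro s hs; rw [hg0def]; simp [max_eq_right hs]
  have hg0pos : ∀ s, 0 < g0 s := fun s => hhpos _ (Set.mem_Ici.2 (le_max_left 1 s))
  have hg0ge : ∀ s, h 1 ≤ g0 s := fun s =>
    hhmono (Set.mem_Ici.2 le_rfl) (Set.mem_Ici.2 (le_max_left 1 s)) (le_max_left 1 s)
  have h1pos : 0 < h 1 := hhpos 1 (Set.mem_Ici.2 le_rfl)
  set H : ℝ → ℝ := fun t => ∫ s in (1:ℝ)..t, g0 s ^ k with hHdef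
  have hHd : ∀ t, HasDerivAt H (g0 t ^ k) t := fun t =>
    ((hg0c.pow k).integral_hasStrictDerivAt 1 t).hasDerivAt
  have hHc : Continuous H := (Differentiable.continuous (fun t => (hHd t).differentiableAt))
  have hH1 : H 1 = 0 := integral_same
  have hHlb : ∀ t, 1 ≤ t → (t - 1) * (h 1)^k ≤ H t := by
    intro t ht
    have hint1 : IntervalIntegrable (fun _ : ℝ => (h 1)^k) MeasureTheory.volume 1 t :=
      intervalIntegrable_const
    have hint2 : IntervalIntegrable (fun s => g0 s ^ k) MeasureTheory.volume 1 t :=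
      (hg0c.pow k).intervalIntegrable 1 t
    have := intervalIntegral.integral_mono_on ht hint1 hint2
      (fun x _ => pow_le_pow_left₀ h1pos.le (hg0ge x) k)
    simpa [smul_eq_mul, mul_comm] using this
  have hHpos : ∀ t, 1 < t → 0 < H t := by
    intro t ht
    refine lt_of_lt_of_le ?_ (hHlb t ht.le)
    have : 0 < t - 1 := by linarith
    positivity
  have hHnonneg : ∀ t, 1 ≤ t → 0 ≤ H t := by
    intro t ht
    rcases eq_or_lt_of_le ht with rfl | ht'
    · rw [← hH1]
    · exact (hHpos t ht').le
  -- rewrite the LHS using H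
  have hwR1 : 1 ≤ w R := hwmap R ⟨le_of_lt hR, le_refl R⟩
  set e : ℝ := -(1:ℝ) / ((k:ℝ) + 1) with hedef
  have hk1pos : (0:ℝ) < (k:ℝ) + 1 := by linarith
  have he0 : e < 0 := div_neg_of_neg_of_pos (by norm_num) hk1pos
  have hene : e ≠ 0 := ne_of_lt he0
  have he1 : -1 < e := by
    rw [hedef]
    rw [neg_div, neg_lt_neg_iff, div_lt_one hk1pos]
    linarith
  have he1pos : 0 < e + 1 := by linarith
  have hLHS : (∫ t in (1:ℝ)..(w R), (∫ s in (1:ℝ)..t, (h s) ^ k) ^ (-(1:ℝ) / ((k:ℝ) + 1)))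
      = ∫ t in (1:ℝ)..(w R), H t ^ e := by
    refine intervalIntegral.integral_congr (fun t ht => ?_)
    rw [Set.uIcc_of_le hwR1] at ht
    have : (∫ s in (1:ℝ)..t, (h s) ^ k) = H t := by
      refine intervalIntegral.integral_congr (fun s hs => ?_)
      rw [Set.uIcc_of_le ht.1] at hs
      rw [hg0eq s hs.1]
    rw [this, hedef]
  -- energy estimate
  have energy : ∀ r ∈ Set.Icc (0:ℝ) R,
      (deriv w r)^(k+1) ≤ ((k:ℝ)+1) * (R^(k-1) * c) * H (w r) := by
    set E : ℝ → ℝ := fun r => R^(k-1) * c * H (w r) - (deriv w r)^(k+1)/((k:ℝ)+1) with hEdef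
    have hEd : ∀ r, HasDerivAt E
        (R^(k-1)*c*(g0 (w r)^k * deriv w r) - (deriv w r)^k * deriv (deriv w) r) r := by
      intro r
      have d1 : HasDerivAt (fun x => H (w x)) (g0 (w r)^k * deriv w r) r :=
        (hHd (w r)).comp r (hwd r).hasDerivAt
      have d2 : HasDerivAt (fun x => (deriv w x)^(k+1)/((k:ℝ)+1))
          (((k+1:ℕ):ℝ) * (deriv w r)^k * deriv (deriv w) r / ((k:ℝ)+1)) r := by
        have := ((hw'd r).hasDerivAt.pow (k+1)).div_const ((k:ℝ)+1)
        simpa using this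
      have d2' : HasDerivAt (fun x => (deriv w x)^(k+1)/((k:ℝ)+1))
          ((deriv w r)^k * deriv (deriv w) r) r := by
        convert d2 using 1
        push_cast
        field_simp
      exact (d1.const_mul _).sub d2'
    have hEmono : MonotoneOn E (Set.Icc (0:ℝ) R) := by
      refine monotoneOn_of_deriv_nonneg (convex_Icc 0 R)
        (Continuous.continuousOn ?_) (fun x _ => ((hEd x).differentiableAt).differentiableWithinAt)
        (fun x hx => ?_)
      · exact Differentiable.continuous (fun t => (hEd t).differentiableAt)
      · rw [interior_Icc] at hx
        have hx' : x ∈ Set.Icc (0:ℝ) R := ⟨hx.1.le, hx.2.le⟩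
        rw [(hEd x).deriv]
        have hkey := key x hx'
        have hwx1 : 1 ≤ w x := hwmap x hx'
        rw [hg0eq (w x) hwx1]
        have : R^(k-1) * c * ((h (w x))^k * deriv w x)
            = R^(k-1) * c * (h (w x))^k * deriv w x := by ring
        rw [this]
        linarith
    intro r hr
    have hE0 : E 0 = 0 := by
      rw [hEdef]
      simp [hw0, hH1, hw'0, zero_pow (by omega : k + 1 ≠ 0)]
    have := hEmono (Set.left_mem_Icc.2 hR.le) hr hr.1
    rw [hE0] at this
    simp only [hEdef] at this
    have h2' : (deriv w r)^(k+1) / ((k:ℝ)+1) ≤ R^(k-1) * c * H (w r) := by linarith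
    rw [div_le_iff₀ hk1pos] at h2'
    calc (deriv w r)^(k+1) ≤ R^(k-1) * c * H (w r) * ((k:ℝ)+1) := h2'
      _ = ((k:ℝ)+1) * (R^(k-1) * c) * H (w r) := by ring
  -- pointwise gradient bound
  set K : ℝ := (((k:ℝ)+1) * (R^(k-1) * c)) ^ ((1:ℝ)/((k:ℝ)+1)) with hKdef
  have hbase : 0 < ((k:ℝ)+1) * (R^(k-1) * c) := by positivity
  have hK : 0 < K := rpow_pos_of_pos hbase _
  have hstep : ∀ r ∈ Set.Icc (0:ℝ) R,
      deriv w r ≤ K * H (w r) ^ ((1:ℝ)/((k:ℝ)+1)) := by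
    intro r hr
    have hwr1 : 1 ≤ w r := hwmap r hr
    
    have hHn : 0 ≤ H (w r) := hHnonneg _ hwr1
    have h1' : (deriv w r)^(k+1) ≤ ((k:ℝ)+1) * (R^(k-1) * c) * H (w r) := energy r hr
    have h2' : ((deriv w r)^(k+1) : ℝ) ^ ((1:ℝ)/((k:ℝ)+1))
        ≤ (((k:ℝ)+1) * (R^(k-1) * c) * H (w r)) ^ ((1:ℝ)/((k:ℝ)+1)) :=
      rpow_le_rpow (pow_nonneg (hw'nonneg r hr) _) h1' (by positivity)
    have h3' : ((deriv w r)^(k+1) : ℝ) ^ ((1:ℝ)/((k:ℝ)+1)) = deriv w r := by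
      rw [← rpow_natCast (deriv w r) (k+1), ← rpow_mul (hw'nonneg r hr)]
      push_cast
      rw [mul_one_div, div_self (ne_of_gt hk1pos), rpow_one]
    rw [h3'] at h2'
    refine h2'.trans (le_of_eq ?_)
    rw [mul_rpow hbase.le hHn, hKdef]
  -- conclusion
  rw [hLHS]
  have hRHSnn : 0 ≤ (((k:ℝ) + 1) * φ / C) ^ ((1:ℝ) / ((k:ℝ) + 1)) * R ^ (2 * (k:ℝ) / ((k:ℝ) + 1)) :=
    mul_nonneg (rpow_nonneg (div_nonneg (by positivity) hC.le) _) (rpow_nonneg hR.le _)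
  rcases eq_or_lt_of_le hwR1 with hb | hb
  · rw [← hb, intervalIntegral.integral_same]
    exact hRHSnn
  -- now 1 < w R
  set M : ℝ := ((h 1)^k : ℝ) ^ e with hMdef
  have hM : 0 < M := rpow_pos_of_pos (by positivity) e
  have hgb : ∀ t : ℝ, 1 < t → H t ^ e ≤ (t-1)^e * M := by
    intro t ht
    have ht1 : (0:ℝ) < t - 1 := by linarith
    have hlow : 0 < (t-1) * (h 1)^k := by positivity
    have h1' : H t ^ e ≤ ((t-1) * (h 1)^k) ^ e :=
      rpow_le_rpow_of_nonpos hlow (hHlb t ht.le) he0.le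
    refine h1'.trans (le_of_eq ?_)
    rw [mul_rpow ht1.le (by positivity), hMdef]
  have hBint : ∀ u v : ℝ, IntervalIntegrable (fun t => (t-1)^e * M) MeasureTheory.volume u v := by
    intro u v
    have := ((intervalIntegrable_rpow' (a := u-1) (b := v-1) he1).comp_sub_right 1).mul_const M
    simpa using this
  have hgInt : IntervalIntegrable (fun t => H t ^ e) MeasureTheory.volume 1 (w R) := by
    refine (hBint 1 (w R)).mono_fun ?_ ?_
    · refine ContinuousOn.aestronglyMeasurable ?_ ?_
      · refine (hHc.continuousOn).rpow_const (fun t ht => ?_)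
        rw [Set.uIoc_of_le hwR1] at ht
        exact Or.inl (ne_of_gt (hHpos t ht.1))
      · rw [Set.uIoc_of_le hwR1]; exact measurableSet_Ioc
    · rw [Set.uIoc_of_le hwR1]
      refine (MeasureTheory.ae_restrict_iff' measurableSet_Ioc).2
        (MeasureTheory.ae_of_all _ (fun t ht => ?_))
      have ht1 : (0:ℝ) < t - 1 := by linarith [ht.1]
      show ‖H t ^ e‖ ≤ ‖(t-1)^e * M‖
      rw [Real.norm_eq_abs, Real.norm_eq_abs,
        abs_of_nonneg (rpow_nonneg (hHnonneg t ht.1.le) e),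
        abs_of_nonneg (mul_nonneg (rpow_nonneg ht1.le e) hM.le)]
      exact hgb t ht.1
  have main : ∀ ε ∈ Set.Ioo (0:ℝ) (w R - 1),
      (∫ t in (1:ℝ)..(w R), H t ^ e) ≤ M / (e+1) * ε ^ (e+1) + K * R := by
    intro ε hε
    have hε0 : 0 < ε := hε.1
    have hεb : 1 + ε ≤ w R := by linarith [hε.2]
    have h1ε : (1:ℝ) ≤ 1 + ε := by linarith
    have I1 : IntervalIntegrable (fun t => H t ^ e) MeasureTheory.volume 1 (1+ε) := by
      refine hgInt.mono_set ?_
      rw [Set.uIcc_of_le h1ε, Set.uIcc_of_le hwR1]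
      exact Set.Icc_subset_Icc le_rfl hεb
    have I2 : IntervalIntegrable (fun t => H t ^ e) MeasureTheory.volume (1+ε) (w R) := by
      refine hgInt.mono_set ?_
      rw [Set.uIcc_of_le hεb, Set.uIcc_of_le hwR1]
      exact Set.Icc_subset_Icc h1ε le_rfl
    have hsplit : (∫ t in (1:ℝ)..(w R), H t ^ e)
        = (∫ t in (1:ℝ)..(1+ε), H t ^ e) + ∫ t in (1+ε)..(w R), H t ^ e :=
      (intervalIntegral.integral_add_adjacent_intervals I1 I2).symm
    have hI1 : (∫ t in (1:ℝ)..(1+ε), H t ^ e) ≤ M / (e+1) * ε ^ (e+1) := by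
      have hmono := intervalIntegral.integral_mono_on h1ε I1 (hBint 1 (1+ε))
        (fun t ht => ?_)
      · have hcalc : (∫ t in (1:ℝ)..(1+ε), (t-1)^e * M) = M/(e+1) * ε^(e+1) := by
          rw [intervalIntegral.integral_mul_const]
          have hsub' : (∫ t in (1:ℝ)..(1+ε), (t-1)^e) = ∫ u in (0:ℝ)..ε, u^e := by
            have := intervalIntegral.integral_comp_sub_right
              (a := (1:ℝ)) (b := 1+ε) (fun u : ℝ => u ^ e) 1
            simpa using this
          rw [hsub', integral_rpow (Or.inl he1), zero_rpow (ne_of_gt he1pos)]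
          ring
        rw [hcalc] at hmono
        exact hmono
      · rcases eq_or_lt_of_le ht.1 with heq | ht1
        · rw [← heq, hH1, zero_rpow hene, sub_self, zero_rpow hene, zero_mul]
        · exact hgb t ht1
    have hI2 : (∫ t in (1+ε)..(w R), H t ^ e) ≤ K * R := by
      obtain ⟨a, ha, hwa⟩ := intermediate_value_Icc hR.le (hw.continuous.continuousOn)
        (show (1:ℝ)+ε ∈ Set.Icc (w 0) (w R) by rw [hw0]; exact ⟨h1ε, hεb⟩)
      have haR : a ≤ R := ha.2
      have hRmem : R ∈ Set.Icc (0:ℝ) R := ⟨hR.le, le_rfl⟩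
      have himg : ∀ x ∈ Set.Icc a R, 1 + ε ≤ w x ∧ w x ≤ w R := by
        intro x hx
        have hx' : x ∈ Set.Icc (0:ℝ) R := ⟨ha.1.trans hx.1, hx.2⟩
        exact ⟨hwa ▸ hwmono ha hx' hx.1, hwmono hx' hRmem hx.2⟩
      have hgcont : ContinuousOn (fun u => H u ^ e) (w '' Set.uIcc a R) := by
        refine (hHc.continuousOn).rpow_const ?_
        rintro u ⟨x, hx, rfl⟩
        rw [Set.uIcc_of_le haR] at hx
        exact Or.inl (ne_of_gt (hHpos _ (lt_of_lt_of_le (by linarith) (himg x hx).1)))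
      have hsub := intervalIntegral.integral_comp_smul_deriv'
        (f := w) (f' := deriv w) (g := fun u => H u ^ e) (a := a) (b := R)
        (fun x _ => (hwd x).hasDerivAt) (hw'c.continuousOn) hgcont
      rw [hwa] at hsub
      simp only [smul_eq_mul, Function.comp] at hsub
      rw [← hsub]
      have hcont2 : ContinuousOn (fun x => deriv w x * H (w x) ^ e) (Set.uIcc a R) := by
        refine (hw'c.continuousOn).mul ?_
        refine ContinuousOn.rpow_const ((hHc.comp hwd.continuous).continuousOn) ?_
        intro x hx
        rw [Set.uIcc_of_le haR] at hx
        exact Or.inl (ne_of_gt (hHpos _ (lt_of_lt_of_le (by linarith) (himg x hx).1)))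
      have hKbound : ∀ x ∈ Set.Icc a R, deriv w x * H (w x) ^ e ≤ K := by
        intro x hx
        have hx0 : x ∈ Set.Icc (0:ℝ) R := ⟨ha.1.trans hx.1, hx.2⟩
        have h1' : 1 + ε ≤ w x := (himg x hx).1
        have hHx : 0 < H (w x) := hHpos _ (by linarith)
        have hmul := mul_le_mul_of_nonneg_right (hstep x hx0) (rpow_nonneg hHx.le e)
        have hone : H (w x) ^ ((1:ℝ)/((k:ℝ)+1)) * H (w x) ^ e = 1 := by
          rw [← rpow_add hHx, show (1:ℝ)/((k:ℝ)+1) + e = 0 by rw [hedef]; ring, rpow_zero]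
        calc deriv w x * H (w x) ^ e
            ≤ K * H (w x) ^ ((1:ℝ)/((k:ℝ)+1)) * H (w x) ^ e := by
              calc deriv w x * H (w x) ^ e
                  ≤ (K * H (w x) ^ ((1:ℝ)/((k:ℝ)+1))) * H (w x) ^ e := hmul
                _ = K * H (w x) ^ ((1:ℝ)/((k:ℝ)+1)) * H (w x) ^ e := by ring
          _ = K := by rw [mul_assoc, hone, mul_one]
      calc (∫ x in a..R, deriv w x * H (w x) ^ e)
          ≤ ∫ _x in a..R, K :=
            intervalIntegral.integral_mono_on haR (hcont2.intervalIntegrable)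
              intervalIntegrable_const hKbound
        _ = (R - a) * K := by rw [intervalIntegral.integral_const, smul_eq_mul]
        _ ≤ K * R := by nlinarith [ha.1, hK.le]
    rw [hsplit]
    exact add_le_add hI1 hI2
  have hfin : (∫ t in (1:ℝ)..(w R), H t ^ e) ≤ K * R := by
    have h0' : Filter.Tendsto (fun ε : ℝ => ε ^ (e+1)) (nhds 0) (nhds 0) := by
      have := (Real.continuousAt_rpow_const 0 (e+1) (Or.inr he1pos.le)).tendsto
      rwa [Real.zero_rpow (ne_of_gt he1pos)] at this
    have hTend : Filter.Tendsto (fun ε : ℝ => M/(e+1) * ε^(e+1) + K * R)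
        (nhdsWithin 0 (Set.Ioi 0)) (nhds (K * R)) := by
      have := ((h0'.const_mul (M/(e+1))).add_const (K*R)).mono_left
        (nhdsWithin_le_nhds (s := Set.Ioi (0:ℝ)))
      simpa using this
    refine ge_of_tendsto hTend ?_
    have hmem : Set.Ioo (0:ℝ) (w R - 1) ∈ nhdsWithin (0:ℝ) (Set.Ioi 0) :=
      Ioo_mem_nhdsGT_of_mem ⟨le_rfl, by linarith⟩
    filter_upwards [hmem] with ε hε using main ε hε
  have hfinal : K * R = (((k:ℝ)+1) * φ / C) ^ ((1:ℝ)/((k:ℝ)+1)) * R ^ (2*(k:ℝ)/((k:ℝ)+1)) := by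
    rw [hKdef]
    have hb1 : ((k:ℝ)+1) * (R^(k-1) * c) = (((k:ℝ)+1) * φ / C) * R^(k-1) := by
      rw [hcdef]; ring
    rw [hb1, Real.mul_rpow (by positivity) (by positivity),
      ← Real.rpow_natCast R (k-1), ← Real.rpow_mul hR.le, mul_assoc,
      ← Real.rpow_add_one (ne_of_gt hR)]
    congr 1
    rw [Nat.cast_sub hk]
    push_cast
    field_simp
    ring
  rw [← hfinal]
  exact hfin
end
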